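/- Let t ≥ 0, and suppose E : [0,∞) → [0,∞) is C¹ and D : [0,∞) → [0,∞) is continuous, satisfying (d/dt)E(t)² + D(t)² + (2/(1+t)) E(t)² ≤ ε²(1+t) h(t)² + (1/(1+t)) E(t)², where h ≥ 0 and E(0) = 0. Assume moreover the a priori bound sup_{t' ∈ [0,t]} (1+t')^{5/4} E(t') ≤ M. Then for every t > 0, ∫_{t/2}^{t} (1+t')^{5/2} D(t')² dt' ≤ M²(1 + (5/2)ln 2) + ε² ∫_{t/2}^{t} (1+t')^{7/2} h(t')² dt'. -/

import Mathlib

open MeasureTheory intervalIntegral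

set_option maxHeartbeats 1000000 in
/-- Weighted dissipation estimate on the dyadic interval `[t/2, t]`. -/
theorem weighted_dissipation_estimate (E E' D h : ℝ → ℝ) (ε M : ℝ)
    (hε : 0 ≤ ε) (hM : 0 ≤ M)
    (hEderiv : ∀ s : ℝ, 0 ≤ s → HasDerivAt E (E' s) s)
    (hEnn : ∀ s : ℝ, 0 ≤ E s) (hDnn : ∀ s : ℝ, 0 ≤ D s) (hhnn : ∀ s : ℝ, 0 ≤ h s)
    (hDcont : Continuous D) (hhcont : Continuous h) (hE'cont : Continuous E')
    (hE0 : E 0 = 0)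
    (hineq : ∀ s : ℝ, 0 ≤ s →
      2 * E s * E' s + (D s)^2 + (2 / (1+s)) * (E s)^2
        ≤ ε^2 * (1+s) * (h s)^2 + (1 / (1+s)) * (E s)^2)
    (t : ℝ) (ht : 0 < t)
    (hsup : ∀ s ∈ Set.Icc (0:ℝ) t, (1+s) ^ ((5:ℝ)/4) * E s ≤ M) :
    (∫ s in (t/2)..t, (1+s) ^ ((5:ℝ)/2) * (D s)^2)
      ≤ M^2 * (1 + (5/2) * Real.log 2)
        + ε^2 * ∫ s in (t/2)..t, (1+s) ^ ((7:ℝ)/2) * (h s)^2 := by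
  have ha0 : 0 < t/2 := by linarith
  have hab : t/2 ≤ t := by linarith
  have huIcc : Set.uIcc (t/2) t = Set.Icc (t/2) t := Set.uIcc_of_le hab
  have hpos : ∀ s ∈ Set.Icc (t/2) t, (0:ℝ) < 1 + s := by
    intro s hs; have := hs.1; linarith
  -- continuity building blocks
  have hcontE : ContinuousOn E (Set.Icc (t/2) t) := fun s hs =>
    ((hEderiv s (by linarith [hs.1])).continuousAt).continuousWithinAt
  have hcpow : ∀ p : ℝ, ContinuousOn (fun s => (1+s) ^ p) (Set.Icc (t/2) t) := by
    intro p
    exact ((continuous_const.add continuous_id).continuousOn).rpow_const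
      (fun s hs => Or.inl (ne_of_gt (hpos s hs)))
  set F : ℝ → ℝ := fun s => (1+s) ^ ((5:ℝ)/2) * (E s)^2 with hF
  set G : ℝ → ℝ := fun s =>
    (5/2) * (1+s) ^ ((3:ℝ)/2) * (E s)^2 + (1+s) ^ ((5:ℝ)/2) * (2 * E s * E' s) with hG
  have hFderiv : ∀ s ∈ Set.Icc (t/2) t, HasDerivAt F (G s) s := by
    intro s hs
    have h1 : HasDerivAt (fun s : ℝ => (1+s) ^ ((5:ℝ)/2))
        ((5/2) * (1+s) ^ ((3:ℝ)/2)) s := by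
      have := (Real.hasDerivAt_rpow_const (x := 1+s) (p := (5:ℝ)/2)
        (Or.inl (ne_of_gt (hpos s hs)))).comp s ((hasDerivAt_id s).const_add 1)
      refine this.congr_deriv ?_
      norm_num
    have h2 : HasDerivAt (fun s => (E s)^2) (2 * E s * E' s) s := by
      have := (hEderiv s (by linarith [hs.1])).pow 2
      refine this.congr_deriv ?_; norm_num
    exact h1.mul h2
  -- rpow relations
  have hv : ∀ s ∈ Set.Icc (t/2) t,
      (1+s) ^ ((5:ℝ)/2) = (1+s) ^ ((3:ℝ)/2) * (1+s) := by
    intro s hs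
    rw [show ((5:ℝ)/2) = (3:ℝ)/2 + 1 by norm_num, Real.rpow_add (hpos s hs), Real.rpow_one]
  have hw : ∀ s ∈ Set.Icc (t/2) t,
      (1+s) ^ ((7:ℝ)/2) = (1+s) ^ ((5:ℝ)/2) * (1+s) := by
    intro s hs
    rw [show ((7:ℝ)/2) = (5:ℝ)/2 + 1 by norm_num, Real.rpow_add (hpos s hs), Real.rpow_one]
  have hq : ∀ s ∈ Set.Icc (t/2) t,
      (1+s) ^ ((5:ℝ)/2) = ((1+s) ^ ((5:ℝ)/4))^2 := by
    intro s hs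
    rw [← Real.rpow_natCast ((1+s) ^ ((5:ℝ)/4)) 2, ← Real.rpow_mul (le_of_lt (hpos s hs))]
    norm_num
  -- pointwise key inequality
  have key : ∀ s ∈ Set.Icc (t/2) t,
      (1+s) ^ ((5:ℝ)/2) * (D s)^2
        ≤ ε^2 * (1+s) ^ ((7:ℝ)/2) * (h s)^2
          + (3/2) * (1+s) ^ ((3:ℝ)/2) * (E s)^2 - G s := by
    intro s hs
    have hp := hpos s hs
    have hs0 : (0:ℝ) ≤ s := by linarith [hs.1]
    have hne : (1:ℝ) + s ≠ 0 := ne_of_gt hp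
    have h0 := hineq s hs0
    have hu : (0:ℝ) ≤ (1+s) ^ ((3:ℝ)/2) := Real.rpow_nonneg (le_of_lt hp) _
    have e1 : (1+s) * ((2/(1+s)) * (E s)^2) = 2 * (E s)^2 := by field_simp
    have e2 : (1+s) * ((1/(1+s)) * (E s)^2) = (E s)^2 := by field_simp
    have h1 : (1+s) * (2 * E s * E' s) + (1+s) * (D s)^2 + 2 * (E s)^2
        ≤ ε^2 * (1+s)^2 * (h s)^2 + (E s)^2 := by
      nlinarith [mul_le_mul_of_nonneg_left h0 (le_of_lt hp), e1, e2]
    have h2 := mul_le_mul_of_nonneg_left h1 hu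
    simp only [hG]
    rw [hw s hs, hv s hs]
    nlinarith [h2]
  -- integrability
  have intD : IntervalIntegrable (fun s => (1+s) ^ ((5:ℝ)/2) * (D s)^2)
      volume (t/2) t := by
    apply ContinuousOn.intervalIntegrable
    rw [huIcc]; exact (hcpow _).mul ((hDcont.pow 2).continuousOn)
  have intH : IntervalIntegrable (fun s => (1+s) ^ ((7:ℝ)/2) * (h s)^2)
      volume (t/2) t := by
    apply ContinuousOn.intervalIntegrable
    rw [huIcc]; exact (hcpow _).mul ((hhcont.pow 2).continuousOn)
  have intE2 : IntervalIntegrable (fun s => (1+s) ^ ((3:ℝ)/2) * (E s)^2)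
      volume (t/2) t := by
    apply ContinuousOn.intervalIntegrable
    rw [huIcc]; exact (hcpow _).mul (hcontE.pow 2)
  have intG : IntervalIntegrable G volume (t/2) t := by
    apply ContinuousOn.intervalIntegrable
    rw [huIcc]
    exact ((continuousOn_const.mul (hcpow _)).mul (hcontE.pow 2)).add
      ((hcpow _).mul ((continuousOn_const.mul hcontE).mul hE'cont.continuousOn))
  have intInv : IntervalIntegrable (fun s => (1+s)⁻¹) volume (t/2) t := by
    apply ContinuousOn.intervalIntegrable
    rw [huIcc]
    exact ((continuous_const.add continuous_id).continuousOn).inv₀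
      (fun s hs => ne_of_gt (hpos s hs))
  -- FTC for F
  have hFTC : ∫ s in (t/2)..t, G s = F t - F (t/2) := by
    apply integral_eq_sub_of_hasDerivAt
    · intro s hs; exact hFderiv s (huIcc ▸ hs)
    · exact intG
  -- FTC for log
  have hlogFTC : ∫ s in (t/2)..t, (1+s)⁻¹ = Real.log (1+t) - Real.log (1+t/2) := by
    apply integral_eq_sub_of_hasDerivAt
    · intro s hs
      have hs' : s ∈ Set.Icc (t/2) t := huIcc ▸ hs
      have := (Real.hasDerivAt_log (ne_of_gt (hpos s hs'))).comp s
        ((hasDerivAt_id s).const_add 1)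
      refine this.congr_deriv ?_
      simp
    · exact intInv
  have GcontOn : ContinuousOn G (Set.Icc (t/2) t) := by
    exact ((continuousOn_const.mul (hcpow _)).mul (hcontE.pow 2)).add
      ((hcpow _).mul ((continuousOn_const.mul hcontE).mul hE'cont.continuousOn))
  have intA : IntervalIntegrable (fun s => ε^2 * (1+s) ^ ((7:ℝ)/2) * (h s)^2)
      volume (t/2) t := by
    apply ContinuousOn.intervalIntegrable
    rw [huIcc]
    exact (continuousOn_const.mul (hcpow _)).mul ((hhcont.pow 2).continuousOn)
  have intB : IntervalIntegrable (fun s => (3/2) * (1+s) ^ ((3:ℝ)/2) * (E s)^2)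
      volume (t/2) t := by
    apply ContinuousOn.intervalIntegrable
    rw [huIcc]
    exact (continuousOn_const.mul (hcpow _)).mul (hcontE.pow 2)
  -- step 1: monotone comparison
  have step1 : (∫ s in (t/2)..t, (1+s) ^ ((5:ℝ)/2) * (D s)^2)
      ≤ ∫ s in (t/2)..t, (ε^2 * (1+s) ^ ((7:ℝ)/2) * (h s)^2
          + (3/2) * (1+s) ^ ((3:ℝ)/2) * (E s)^2 - G s) := by
    apply integral_mono_on hab intD ((intA.add intB).sub intG) key
  -- step 2: split the integral
  have step2 : (∫ s in (t/2)..t, (ε^2 * (1+s) ^ ((7:ℝ)/2) * (h s)^2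
          + (3/2) * (1+s) ^ ((3:ℝ)/2) * (E s)^2 - G s))
      = ε^2 * (∫ s in (t/2)..t, (1+s) ^ ((7:ℝ)/2) * (h s)^2)
        + (3/2) * (∫ s in (t/2)..t, (1+s) ^ ((3:ℝ)/2) * (E s)^2)
        - (F t - F (t/2)) := by
    rw [integral_sub (intA.add intB) intG, integral_add intA intB, hFTC]
    congr 1
    congr 1
    · simp only [mul_assoc]
      exact integral_const_mul _ _
    · simp only [mul_assoc]
      exact integral_const_mul _ _
  -- bound the E-term
  have keyE : ∀ s ∈ Set.Icc (t/2) t,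
      (1+s) ^ ((3:ℝ)/2) * (E s)^2 ≤ M^2 * (1+s)⁻¹ := by
    intro s hs
    have hp := hpos s hs
    have hsups := hsup s ⟨by linarith [hs.1], hs.2⟩
    have hnn : 0 ≤ (1+s) ^ ((5:ℝ)/4) * E s :=
      mul_nonneg (Real.rpow_nonneg (le_of_lt hp) _) (hEnn s)
    have hE2 : (1+s) ^ ((5:ℝ)/2) * (E s)^2 ≤ M^2 := by
      rw [hq s hs]
      calc ((1+s) ^ ((5:ℝ)/4))^2 * (E s)^2 = ((1+s) ^ ((5:ℝ)/4) * E s)^2 := by ring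
        _ ≤ M^2 := pow_le_pow_left₀ hnn hsups 2
    have heq : (1+s) ^ ((3:ℝ)/2) * (E s)^2
        = ((1+s) ^ ((5:ℝ)/2) * (E s)^2) * (1+s)⁻¹ := by
      rw [hv s hs]; field_simp
    rw [heq]
    exact mul_le_mul_of_nonneg_right hE2 (inv_nonneg.mpr (le_of_lt hp))
  have stepE : (∫ s in (t/2)..t, (1+s) ^ ((3:ℝ)/2) * (E s)^2)
      ≤ M^2 * (Real.log (1+t) - Real.log (1+t/2)) := by
    rw [← hlogFTC, ← intervalIntegral.integral_const_mul]
    exact integral_mono_on hab intE2 (intInv.const_mul _) keyE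
  have hlog2 : Real.log (1+t) - Real.log (1+t/2) ≤ Real.log 2 := by
    have h2p : (0:ℝ) < 1 + t/2 := by linarith
    have h1 : Real.log (1+t) ≤ Real.log (2 * (1+t/2)) := by
      apply Real.log_le_log (by linarith)
      linarith
    rw [Real.log_mul (by norm_num) (ne_of_gt h2p)] at h1
    linarith
  -- F(t/2) ≤ M², F t ≥ 0
  have hFa : F (t/2) ≤ M^2 := by
    have hsa : t/2 ∈ Set.Icc (t/2) t := ⟨le_refl _, hab⟩
    have hsupa := hsup (t/2) ⟨le_of_lt ha0, hab⟩
    have hp := hpos _ hsa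
    have hnn : 0 ≤ (1+t/2) ^ ((5:ℝ)/4) * E (t/2) :=
      mul_nonneg (Real.rpow_nonneg (le_of_lt hp) _) (hEnn _)
    simp only [hF]
    rw [hq _ hsa]
    calc ((1+t/2) ^ ((5:ℝ)/4))^2 * (E (t/2))^2
        = ((1+t/2) ^ ((5:ℝ)/4) * E (t/2))^2 := by ring
      _ ≤ M^2 := pow_le_pow_left₀ hnn hsupa 2
  have hFt : 0 ≤ F t :=
    mul_nonneg (Real.rpow_nonneg (by linarith : (0:ℝ) ≤ 1 + t) _) (sq_nonneg _)
  have hlog2nn : 0 ≤ Real.log 2 := Real.log_nonneg (by norm_num)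
  nlinarith [step1, step2, stepE, hlog2, hFa, hFt, sq_nonneg M,
    mul_le_mul_of_nonneg_left hlog2 (sq_nonneg M)]
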